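/- Let X be a real normed space, x a unit vector, and suppose both u ∈ x⁺ ∩ x⁻ holds for u, i.e., ‖x + λu‖ ≥ ‖x‖ for all λ ≥ 0 and all λ ≤ 0. Then x is Birkhoff-James orthogonal to u; conversely, every u ∈ X satisfies u ∈ x⁺ or u ∈ x⁻, so X = (x⁺ \ x^⊥) ∪ (x⁻ \ x^⊥) ∪ x^⊥. -/

import Mathlib

/-- Birkhoff-James orthogonality: `u ⊥_B v` iff `‖u + λ v‖ ≥ ‖u‖` for all real `λ`. -/
def BJOrth {E : Type*} [NormedAddCommGroup E] [NormedSpace ℝ E] (u v : E) : Prop :=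
  ∀ l : ℝ, ‖u‖ ≤ ‖u + l • v‖

theorem stmt18 {X : Type*} [NormedAddCommGroup X] [NormedSpace ℝ X]
    (x : X) (hx : ‖x‖ = 1) (u : X)
    (hp : ∀ l : ℝ, 0 ≤ l → ‖x‖ ≤ ‖x + l • u‖)
    (hm : ∀ l : ℝ, l ≤ 0 → ‖x‖ ≤ ‖x + l • u‖) :
    BJOrth x u ∧
      ∀ v : X, (∀ l : ℝ, 0 ≤ l → ‖x‖ ≤ ‖x + l • v‖) ∨
        (∀ l : ℝ, l ≤ 0 → ‖x‖ ≤ ‖x + l • v‖) := by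
  constructor
  · intro l
    rcases le_total 0 l with h | h
    · exact hp l h
    · exact hm l h
  · intro v
    by_contra hcon
    push_neg at hcon
    obtain ⟨⟨a, ha0, hfa⟩, ⟨b, hb0, hfb⟩⟩ := hcon
    have ha : 0 < a := lt_of_le_of_ne ha0 (by
      rintro rfl; simp at hfa)
    have hb : b < 0 := lt_of_le_of_ne hb0 (by
      rintro rfl; simp at hfb)
    set t : ℝ := (-b) / (a - b) with ht
    have hab : 0 < a - b := by linarith
    have ht0 : 0 < t := div_pos (by linarith) hab
    have ht1 : t < 1 := by
      rw [div_lt_one hab]; linarith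
    have hsum : t * a + (1 - t) * b = 0 := by
      field_simp [ht]
      have h2 : t * (a - b) = -b := div_mul_cancel₀ _ hab.ne'
      linear_combination h2
    have hx' : x = t • (x + a • v) + (1 - t) • (x + b • v) := by
      rw [smul_add, smul_add, smul_smul, smul_smul]
      have : t • x + (1 - t) • x = x := by
        rw [← add_smul]; simp
      rw [show t • x + (t * a) • v + ((1 - t) • x + ((1 - t) * b) • v)
          = (t • x + (1 - t) • x) + ((t * a) • v + ((1 - t) * b) • v) by abel,
        this, ← add_smul, hsum, zero_smul, add_zero]
    have : ‖x‖ < ‖x‖ := by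
      calc ‖x‖ = ‖t • (x + a • v) + (1 - t) • (x + b • v)‖ := by rw [← hx']
        _ ≤ ‖t • (x + a • v)‖ + ‖(1 - t) • (x + b • v)‖ := norm_add_le _ _
        _ = t * ‖x + a • v‖ + (1 - t) * ‖x + b • v‖ := by
            rw [norm_smul, norm_smul, Real.norm_eq_abs, Real.norm_eq_abs,
              abs_of_pos ht0, abs_of_pos (by linarith)]
        _ < t * ‖x‖ + (1 - t) * ‖x‖ := by
            apply add_lt_add
            · exact (mul_lt_mul_iff_right₀ ht0).mpr hfa
            · exact (mul_lt_mul_iff_right₀ (by linarith)).mpr hfb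
        _ = ‖x‖ := by ring
    exact lt_irrefl _ this
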